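/- The operator D_c satisfies D_c² = 0, both as an operator on the Weil algebra 𝒲 and as an operator on B. -/

import Mathlib

open scoped TensorProduct
noncomputable section

abbrev Vc (r : ℕ) := Fin r → ℂ
abbrev Pc (r : ℕ) := MvPolynomial (Fin r) ℂ
abbrev Ec (r : ℕ) := ExteriorAlgebra ℂ (Vc r)
abbrev Wc (r : ℕ) := Ec r ⊗[ℂ] Pc r

variable {r : ℕ}

/-- The standard symmetric bilinear form on `ℂ^r`. -/
def bil (x y : Vc r) : ℂ := ∑ i, x i * y i

/-- A vector of `ℂ^r` viewed as a degree-one polynomial. -/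
def linP (v : Vc r) : Pc r := ∑ i, MvPolynomial.C (v i) * MvPolynomial.X i

/-- The action of a linear automorphism of `V` on polynomials (i.e. on `S(V)`). -/
def pAct (g : Vc r ≃ₗ[ℂ] Vc r) : Pc r →ₐ[ℂ] Pc r :=
  MvPolynomial.aeval fun i => linP (g (Pi.single i 1))

/-- The action of a linear automorphism of `V` on the exterior algebra of `V`. -/
def eAct (g : Vc r ≃ₗ[ℂ] Vc r) : Ec r →ₐ[ℂ] Ec r :=
  ExteriorAlgebra.map (g : Vc r →ₗ[ℂ] Vc r)

/-- The diagonal action of a linear automorphism of `V` on the Weil algebra `⋀V ⊗ S(V)`. -/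
def wAct (g : Vc r ≃ₗ[ℂ] Vc r) : Wc r →ₐ[ℂ] Wc r :=
  Algebra.TensorProduct.map (eAct g) (pAct g)

/-- A vector of `V` viewed inside the exterior algebra. -/
def exti (v : Vc r) : Ec r := ExteriorAlgebra.ι ℂ v

/-- The de Rham differential on the Weil algebra: `d(q ⊗ k) = ∑ᵢ (xᵢ ∧ q) ⊗ ∂k/∂xᵢ`. -/
def deRham : Wc r →ₗ[ℂ] Wc r :=
  ∑ i, TensorProduct.map (LinearMap.mulLeft ℂ (exti (Pi.single i 1))) ((MvPolynomial.pderiv i).toLinearMap)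

/-- The directional derivative `∂_v`. -/
def dirDeriv (v : Vc r) : Pc r →ₗ[ℂ] Pc r := ∑ i, v i • (MvPolynomial.pderiv i).toLinearMap

/-- `g` is a reflection with root `a`, with respect to the standard bilinear form. -/
def IsReflRoot (g : Vc r ≃ₗ[ℂ] Vc r) (a : Vc r) : Prop :=
  a ≠ 0 ∧ g a = -a ∧ ∀ v, bil a v = 0 → g v = v

/-- The relation whose associated two-sided ideal is `𝒲J`, the ideal generated by the `ψᵢ`. -/
def relJ (ψ : Fin r → Pc r) : Wc r → Wc r → Prop :=
  fun x y => (∃ i, x = (1 : Ec r) ⊗ₜ[ℂ] ψ i) ∧ y = 0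

/-- `B = ⋀V ⊗ H = 𝒲/𝒲J`. -/
abbrev Bc (ψ : Fin r → Pc r) := RingQuot (relJ ψ)

/-- The quotient map `π : 𝒲 → B`. -/
def πB (ψ : Fin r → Pc r) : Wc r →ₐ[ℂ] Bc ψ := RingQuot.mkAlgHom ℂ (relJ ψ)

/-- The Solomon elements `pᵢ = π(d(1 ⊗ ψᵢ))`. -/
def pSol (ψ : Fin r → Pc r) (i : Fin r) : Bc ψ := πB ψ (deRham ((1 : Ec r) ⊗ₜ[ℂ] ψ i))

/-- The covariants `fᵢ(v) = π(1 ⊗ ∂_v ψᵢ)`. -/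
def fcov (ψ : Fin r → Pc r) (i : Fin r) (v : Vc r) : Bc ψ :=
  πB ψ ((1 : Ec r) ⊗ₜ[ℂ] dirDeriv v (ψ i))

/-- The `B`-valued pairing `E(φ, χ) = ∑ᵢ φ(xᵢ)·χ(xᵢ)` on maps `V → B`. -/
def Eform (ψ : Fin r → Pc r) (φ χ : Vc r → Bc ψ) : Bc ψ :=
  ∑ i, φ (Pi.single i 1) * χ (Pi.single i 1)


/-- The covariants `uᵢ = (r/(2|T|))·D∘fᵢ`, where `D` (given here as the operator `DB` on `B`
induced by `D = ∑_{s ∈ T} ∇ₛ`) is the Dunkl differential with `c = 1`. -/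
def ucov (ψ : Fin r → Pc r) (T : Finset (Vc r ≃ₗ[ℂ] Vc r)) (DB : Bc ψ →ₗ[ℂ] Bc ψ)
    (i : Fin r) (v : Vc r) : Bc ψ :=
  ((r : ℂ) / (2 * T.card)) • DB (fcov ψ i v)


section Aux
variable {r : ℕ}

lemma bil_add_right (a x y : Vc r) : bil a (x + y) = bil a x + bil a y := by
  simp [bil, mul_add, Finset.sum_add_distrib]

lemma bil_smul_right (a : Vc r) (c : ℂ) (x : Vc r) : bil a (c • x) = c * bil a x := by
  simp [bil, Finset.mul_sum]; exact Finset.sum_congr rfl fun i _ => by ring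

lemma bil_sub_right (a x y : Vc r) : bil a (x - y) = bil a x - bil a y := by
  simp [bil, mul_sub, Finset.sum_sub_distrib]

lemma bil_comm (a b : Vc r) : bil a b = bil b a := by simp [bil, mul_comm]

lemma bil_single (a : Vc r) (i : Fin r) : bil a (Pi.single i 1) = a i := by
  simp [bil, Pi.single_apply, Finset.sum_ite_eq']

lemma eval_linP (x : Vc r) (a : Vc r) : MvPolynomial.eval x (linP a) = bil a x := by
  simp [linP, bil]

lemma linP_add (a b : Vc r) : linP (a + b) = linP a + linP b := by
  simp [linP, add_mul, Finset.sum_add_distrib]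

lemma linP_smul (c : ℂ) (a : Vc r) : linP (c • a) = MvPolynomial.C c * linP a := by
  simp [linP, Finset.mul_sum, mul_assoc]

lemma linP_neg (a : Vc r) : linP (-a) = - linP a := by
  simp [linP, Finset.sum_neg_distrib]

lemma linP_sub (a b : Vc r) : linP (a - b) = linP a - linP b := by
  simp [linP, sub_mul, Finset.sum_sub_distrib]

lemma linP_ne_zero {a : Vc r} (ha : a ≠ 0) : linP a ≠ 0 := by
  intro h
  apply ha
  funext i
  have := eval_linP (Pi.single i 1) a
  rw [h, map_zero, bil_single] at this
  simpa using this.symm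

lemma linP_single (i : Fin r) : linP (Pi.single i (1:ℂ)) = MvPolynomial.X i := by
  simp [linP, Pi.single_apply, apply_ite MvPolynomial.C, Finset.sum_ite_eq']

end Aux

section Aux2
variable {r : ℕ}

lemma oneT_mul (p : Pc r) (ω : Wc r) :
    ((1:Ec r) ⊗ₜ[ℂ] p) * ω = LinearMap.lTensor (Ec r) (LinearMap.mulLeft ℂ p) ω := by
  induction ω using TensorProduct.induction_on with
  | zero => simp
  | tmul x q => simp [Algebra.TensorProduct.tmul_mul_tmul]
  | add x y hx hy => rw [mul_add, map_add, hx, hy]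

lemma mul_oneT_inj {a : Vc r} (ha : a ≠ 0) {ω₁ ω₂ : Wc r}
    (h : ((1:Ec r) ⊗ₜ[ℂ] linP a) * ω₁ = ((1:Ec r) ⊗ₜ[ℂ] linP a) * ω₂) : ω₁ = ω₂ := by
  rw [oneT_mul, oneT_mul] at h
  refine Module.Flat.lTensor_preserves_injective_linearMap _ ?_ h
  intro x y hxy
  exact mul_right_injective₀ (linP_ne_zero ha) hxy

lemma oneT_comm (p : Pc r) (ω : Wc r) :
    ((1:Ec r) ⊗ₜ[ℂ] p) * ω = ω * ((1:Ec r) ⊗ₜ[ℂ] p) := by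
  induction ω using TensorProduct.induction_on with
  | zero => simp
  | tmul x q => simp [Algebra.TensorProduct.tmul_mul_tmul, mul_comm]
  | add x y hx hy => rw [mul_add, add_mul, hx, hy]

lemma sum_smul_single (a : Vc r) : ∑ i, a i • (Pi.single i 1 : Vc r) = a := by
  funext j
  simp [Finset.sum_apply, Pi.single_apply, Finset.sum_ite_eq']

/-- `linP` as a linear map. -/
def linPL : Vc r →ₗ[ℂ] Pc r where
  toFun := linP
  map_add' := linP_add
  map_smul' := by intro c a; simp [linP_smul, MvPolynomial.smul_eq_C_mul]

lemma pAct_X (g : Vc r ≃ₗ[ℂ] Vc r) (i : Fin r) :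
    pAct g (MvPolynomial.X i) = linP (g (Pi.single i 1)) := by
  simp [pAct]

lemma linP_sum {ι : Type*} (s : Finset ι) (f : ι → Vc r) :
    linP (∑ i ∈ s, f i) = ∑ i ∈ s, linP (f i) := by
  exact map_sum (linPL (r := r)) f s

lemma pAct_C (g : Vc r ≃ₗ[ℂ] Vc r) (c : ℂ) : pAct g (MvPolynomial.C c) = MvPolynomial.C c := by
  simp [pAct]

lemma pAct_linP (g : Vc r ≃ₗ[ℂ] Vc r) (a : Vc r) : pAct g (linP a) = linP (g a) := by
  have hg : g a = ∑ i, a i • g (Pi.single i 1) := by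
    conv_lhs => rw [← sum_smul_single a]
    rw [map_sum]
    exact Finset.sum_congr rfl fun i _ => map_smul g _ _
  conv_lhs => rw [← sum_smul_single a]
  rw [linP_sum, map_sum, hg, linP_sum]
  refine Finset.sum_congr rfl fun i _ => ?_
  rw [linP_smul, linP_smul, map_mul, pAct_C, linP_single, pAct_X]

lemma eAct_exti (g : Vc r ≃ₗ[ℂ] Vc r) (a : Vc r) : eAct g (exti a) = exti (g a) := by
  simp [eAct, exti, ExteriorAlgebra.map_apply_ι]

lemma wAct_tmul (g : Vc r ≃ₗ[ℂ] Vc r) (x : Ec r) (q : Pc r) :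
    wAct g (x ⊗ₜ[ℂ] q) = eAct g x ⊗ₜ[ℂ] pAct g q := rfl

lemma pAct_pAct (g h : Vc r ≃ₗ[ℂ] Vc r) (q : Pc r) :
    pAct g (pAct h q) = pAct (g * h) q := by
  have : (pAct g).comp (pAct h) = pAct (g * h) := by
    apply MvPolynomial.algHom_ext
    intro i
    simp only [AlgHom.comp_apply, pAct_X, pAct_linP]
    rfl
  exact congrArg (fun f => f q) (congrArg DFunLike.coe this) |>.trans rfl

lemma pAct_one (q : Pc r) : pAct (1 : Vc r ≃ₗ[ℂ] Vc r) q = q := by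
  have : pAct (1 : Vc r ≃ₗ[ℂ] Vc r) = AlgHom.id ℂ (Pc r) := by
    apply MvPolynomial.algHom_ext
    intro i
    simp [pAct_X, linP_single]
  rw [this]; rfl

lemma eAct_eAct (g h : Vc r ≃ₗ[ℂ] Vc r) (x : Ec r) :
    eAct g (eAct h x) = eAct (g * h) x := by
  have : (eAct g).comp (eAct h) = eAct (g * h) := by
    rw [eAct, eAct, eAct, ExteriorAlgebra.map_comp_map]
    rfl
  exact congrArg (fun f => f x) (congrArg DFunLike.coe this) |>.trans rfl

lemma eAct_one (x : Ec r) : eAct (1 : Vc r ≃ₗ[ℂ] Vc r) x = x := by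
  have h : ((1 : Vc r ≃ₗ[ℂ] Vc r) : Vc r →ₗ[ℂ] Vc r) = LinearMap.id :=
    LinearEquiv.coe_toLinearMap_one
  rw [eAct, h, ExteriorAlgebra.map_id]
  rfl

lemma wAct_wAct (g h : Vc r ≃ₗ[ℂ] Vc r) (ω : Wc r) :
    wAct g (wAct h ω) = wAct (g * h) ω := by
  induction ω using TensorProduct.induction_on with
  | zero => simp
  | tmul x q => rw [wAct_tmul, wAct_tmul, wAct_tmul, eAct_eAct, pAct_pAct]
  | add x y hx hy => rw [map_add, map_add, map_add, hx, hy]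

lemma wAct_one (ω : Wc r) : wAct (1 : Vc r ≃ₗ[ℂ] Vc r) ω = ω := by
  induction ω using TensorProduct.induction_on with
  | zero => simp
  | tmul x q => rw [wAct_tmul, eAct_one, pAct_one]
  | add x y hx hy => rw [map_add, hx, hy]

end Aux2

section Aux3
variable {r : ℕ}

lemma lequiv_mul_apply (f g : Vc r ≃ₗ[ℂ] Vc r) (v : Vc r) : (f * g) v = f (g v) := rfl

lemma lequiv_inv_apply (f : Vc r ≃ₗ[ℂ] Vc r) (v : Vc r) : f⁻¹ (f v) = v :=
  f.symm_apply_apply v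

lemma lequiv_apply_inv (f : Vc r ≃ₗ[ℂ] Vc r) (v : Vc r) : f (f⁻¹ v) = v :=
  f.apply_symm_apply v

lemma IsReflRoot.bil_ne {s : Vc r ≃ₗ[ℂ] Vc r} {a : Vc r} (h : IsReflRoot s a) :
    bil a a ≠ 0 := by
  intro h0
  have h1 := h.2.2 a h0
  rw [h.2.1] at h1
  apply h.1
  have h2 : (2 : ℂ) • a = 0 := by
    rw [two_smul]
    nth_rewrite 1 [← h1]
    abel
  simpa using (smul_eq_zero.mp h2).resolve_left (by norm_num)

lemma IsReflRoot.apply {s : Vc r ≃ₗ[ℂ] Vc r} {a : Vc r} (h : IsReflRoot s a) (v : Vc r) :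
    s v = v - (2 * bil a v / bil a a) • a := by
  have hb := h.bil_ne
  set c := bil a v / bil a a with hc
  have hv : bil a (v - c • a) = 0 := by
    rw [bil_sub_right, bil_smul_right, hc]
    field_simp
    ring
  have h2 := h.2.2 _ hv
  have h3 : v = c • a + (v - c • a) := by abel
  have h4 : s v = c • s a + (v - c • a) := by
    conv_lhs => rw [h3]
    rw [map_add, map_smul, h2]
  rw [h4, h.2.1, hc]
  rw [smul_neg]
  rw [show 2 * bil a v / bil a a = 2 * (bil a v / bil a a) by ring, mul_smul, two_smul]
  abel

lemma IsReflRoot.bil_apply {s : Vc r ≃ₗ[ℂ] Vc r} {a : Vc r} (h : IsReflRoot s a) (v : Vc r) :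
    bil a (s v) = - bil a v := by
  rw [h.apply v, bil_sub_right, bil_smul_right, div_mul_cancel₀ _ h.bil_ne]
  ring

lemma IsReflRoot.sq {s : Vc r ≃ₗ[ℂ] Vc r} {a : Vc r} (h : IsReflRoot s a) : s * s = 1 := by
  refine LinearEquiv.ext fun v => ?_
  show s (s v) = v
  rw [h.apply (s v), h.bil_apply, h.apply v]
  rw [mul_neg, neg_div, neg_smul]
  abel

lemma IsReflRoot.inv_eq {s : Vc r ≃ₗ[ℂ] Vc r} {a : Vc r} (h : IsReflRoot s a) : s⁻¹ = s := by
  rw [← mul_one s⁻¹, ← h.sq, ← mul_assoc, inv_mul_cancel, one_mul]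

/-- any `-1`-eigenvector of a reflection is a multiple of the root -/
lemma IsReflRoot.eigen {s : Vc r ≃ₗ[ℂ] Vc r} {a w : Vc r} (h : IsReflRoot s a)
    (hw : s w = -w) : ∃ c : ℂ, w = c • a := by
  have h1 := h.apply w
  rw [hw] at h1
  refine ⟨2 * bil a w / bil a a / 2, ?_⟩
  have h2 : w + w = (2 * bil a w / bil a a) • a := by
    have := congrArg (fun x => x + w + (2 * bil a w / bil a a) • a) h1
    rw [show -w + w + (2 * bil a w / bil a a) • a = (2 * bil a w / bil a a) • a by abel] at this
    rw [this]
    abel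
  have h3 := congrArg (fun x => ((2:ℂ)⁻¹) • x) h2
  simp only [smul_add, smul_smul] at h3
  rw [show ((2:ℂ)⁻¹) • w + ((2:ℂ)⁻¹) • w = ((2:ℂ)⁻¹ + (2:ℂ)⁻¹) • w by rw [add_smul]] at h3
  rw [show ((2:ℂ)⁻¹ + (2:ℂ)⁻¹) = 1 by norm_num, one_smul] at h3
  rw [show 2 * bil a w / bil a a / 2 = (2:ℂ)⁻¹ * (2 * bil a w / bil a a) by ring]
  exact h3

lemma IsReflRoot.conj {s t : Vc r ≃ₗ[ℂ] Vc r} {a : Vc r}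
    (hs : IsReflRoot s a) (ht : ∀ x y, bil (t x) (t y) = bil x y) :
    IsReflRoot (t⁻¹ * s * t) (t⁻¹ a) := by
  refine ⟨?_, ?_, ?_⟩
  · intro h0
    apply hs.1
    have := congrArg t h0
    rw [lequiv_apply_inv, map_zero] at this
    exact this
  · show t⁻¹ (s (t (t⁻¹ a))) = -(t⁻¹ a)
    rw [lequiv_apply_inv, hs.2.1, map_neg]
  · intro v hv
    have hb : bil a (t v) = 0 := by
      have := ht (t⁻¹ a) v
      rw [lequiv_apply_inv] at this
      rw [this]; exact hv
    show t⁻¹ (s (t v)) = v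
    rw [hs.2.2 _ hb, lequiv_inv_apply]

end Aux3

set_option maxHeartbeats 1000000
section Aux4
variable {r : ℕ}

/-- multiplication operator `1 ⊗ α` -/
abbrev mP (a : Vc r) : Wc r := (1 : Ec r) ⊗ₜ[ℂ] linP a
/-- multiplication operator `α ⊗ 1` -/
abbrev mE (a : Vc r) : Wc r := (exti a) ⊗ₜ[ℂ] (1 : Pc r)

lemma mP_smul (c : ℂ) (a : Vc r) : mP (c • a) = c • mP a := by
  rw [mP, linP_smul, ← MvPolynomial.smul_eq_C_mul, TensorProduct.tmul_smul]

lemma mP_sub (a b : Vc r) : mP (a - b) = mP a - mP b := by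
  rw [mP, linP_sub, TensorProduct.tmul_sub]

lemma mE_smul (c : ℂ) (a : Vc r) : mE (c • a) = c • mE a := by
  rw [mE, exti, map_smul]
  exact (TensorProduct.smul_tmul' c (ExteriorAlgebra.ι ℂ a) 1).symm

lemma mE_sub (a b : Vc r) : mE (a - b) = mE a - mE b := by
  simp only [mE, exti, map_sub, TensorProduct.sub_tmul]

lemma mE_mul_self (a : Vc r) : mE a * mE a = 0 := by
  rw [Algebra.TensorProduct.tmul_mul_tmul, exti, ExteriorAlgebra.ι_sq_zero,
    TensorProduct.zero_tmul]

lemma mE_anticomm (a b : Vc r) : mE a * mE b = -(mE b * mE a) := by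
  simp only [Algebra.TensorProduct.tmul_mul_tmul, exti]
  rw [show ExteriorAlgebra.ι ℂ a * ExteriorAlgebra.ι ℂ b
      = -(ExteriorAlgebra.ι ℂ b * ExteriorAlgebra.ι ℂ a) from
    eq_neg_of_add_eq_zero_left (ExteriorAlgebra.ι_add_mul_swap a b)]
  rw [TensorProduct.neg_tmul]

lemma wmul_neg (x y : Wc r) : x * -y = -(x * y) := mul_neg x y
lemma wneg_mul (x y : Wc r) : -x * y = -(x * y) := neg_mul x y

lemma mP_comm (a : Vc r) (ω : Wc r) : mP a * ω = ω * mP a := oneT_comm _ ω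

lemma mP_mP_left_comm (a b : Vc r) (x : Wc r) :
    mP a * (mP b * x) = mP b * (mP a * x) := by
  rw [← mul_assoc, mP_comm a (mP b), mul_assoc]

lemma mP_mE_left_comm (a b : Vc r) (x : Wc r) :
    mP a * (mE b * x) = mE b * (mP a * x) := by
  rw [← mul_assoc, mP_comm a (mE b), mul_assoc]

lemma mE_mE_left_comm (a b : Vc r) (x : Wc r) :
    mE a * (mE b * x) = -(mE b * (mE a * x)) := by
  rw [← mul_assoc, mE_anticomm a b, wneg_mul, mul_assoc]

lemma mE_mE_self_cancel (a : Vc r) (x : Wc r) : mE a * (mE a * x) = 0 := by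
  rw [← mul_assoc, mE_mul_self, zero_mul]

lemma wAct_mP (g : Vc r ≃ₗ[ℂ] Vc r) (a : Vc r) : wAct g (mP a) = mP (g a) := by
  rw [mP, wAct_tmul, map_one, pAct_linP]

lemma wAct_mE (g : Vc r ≃ₗ[ℂ] Vc r) (a : Vc r) : wAct g (mE a) = mE (g a) := by
  rw [mE, wAct_tmul, map_one, eAct_exti]

section Nab

variable {T : Finset (Vc r ≃ₗ[ℂ] Vc r)} {α : (Vc r ≃ₗ[ℂ] Vc r) → Vc r}
  {nab : (Vc r ≃ₗ[ℂ] Vc r) → Wc r →ₗ[ℂ] Wc r}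
  (hα : ∀ s ∈ T, IsReflRoot s (α s))
  (hnab : ∀ s ∈ T, ∀ ω, ((1 : Ec r) ⊗ₜ[ℂ] linP (α s)) * nab s ω
      = ((exti (α s)) ⊗ₜ[ℂ] (1 : Pc r)) * (ω - wAct s ω))

include hα hnab

lemma nab_char {s : Vc r ≃ₗ[ℂ] Vc r} (hs : s ∈ T) (ω X : Wc r)
    (hX : mP (α s) * X = mE (α s) * (ω - wAct s ω)) : nab s ω = X :=
  mul_oneT_inj (hα s hs).1 ((hnab s hs ω).trans hX.symm)

lemma nab_one {s : Vc r ≃ₗ[ℂ] Vc r} (hs : s ∈ T) : nab s 1 = 0 := by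
  refine nab_char hα hnab hs 1 0 ?_
  rw [map_one, sub_self, mul_zero, mul_zero]

lemma nab_mulP {s : Vc r ≃ₗ[ℂ] Vc r} (hs : s ∈ T) (v : Vc r) (ω : Wc r) :
    nab s (mP v * ω) = mP v * nab s ω
      + (2 * bil (α s) v / bil (α s) (α s)) • (mE (α s) * wAct s ω) := by
  refine nab_char hα hnab hs _ _ ?_
  have hw : wAct s (mP v * ω)
      = (mP v - (2 * bil (α s) v / bil (α s) (α s)) • mP (α s)) * wAct s ω := by
    rw [map_mul, wAct_mP, (hα s hs).apply v, mP_sub, mP_smul]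
  conv_lhs =>
    rw [mul_add, mul_smul_comm, mP_mP_left_comm, hnab s hs ω, mP_mE_left_comm,
      mP_mE_left_comm, ← mul_smul_comm, ← mul_add]
  conv_rhs =>
    rw [hw, show mP v * ω - (mP v - (2 * bil (α s) v / bil (α s) (α s)) • mP (α s)) * wAct s ω
        = mP v * (ω - wAct s ω)
          + (2 * bil (α s) v / bil (α s) (α s)) • (mP (α s) * wAct s ω) by
      rw [mul_sub, sub_mul, smul_mul_assoc]; abel]

lemma nab_mulE {s : Vc r ≃ₗ[ℂ] Vc r} (hs : s ∈ T) (u : Vc r) (ω : Wc r) :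
    nab s (mE u * ω) = -(mE u * nab s ω) := by
  refine nab_char hα hnab hs _ _ ?_
  have hw : wAct s (mE u * ω)
      = (mE u - (2 * bil (α s) u / bil (α s) (α s)) • mE (α s)) * wAct s ω := by
    rw [map_mul, wAct_mE, (hα s hs).apply u, mE_sub, mE_smul]
  conv_lhs =>
    rw [wmul_neg, mP_mE_left_comm, hnab s hs ω, mE_mE_left_comm, neg_neg]
  conv_rhs =>
    rw [hw, show mE u * ω - (mE u - (2 * bil (α s) u / bil (α s) (α s)) • mE (α s)) * wAct s ω
        = mE u * (ω - wAct s ω)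
          + (2 * bil (α s) u / bil (α s) (α s)) • (mE (α s) * wAct s ω) by
      rw [mul_sub, sub_mul, smul_mul_assoc]; abel]
    rw [mul_add, mul_smul_comm, mE_mE_self_cancel, smul_zero, add_zero]

lemma nab_conj {s t : Vc r ≃ₗ[ℂ] Vc r} (hs : s ∈ T)
    (hst : t⁻¹ * s * t ∈ T)
    (ht : ∀ x y, bil (t x) (t y) = bil x y) (ω : Wc r) :
    nab s (wAct t ω) = wAct t (nab (t⁻¹ * s * t) ω) := by
  have hroot : IsReflRoot (t⁻¹ * s * t) (t⁻¹ (α s)) := (hα s hs).conj ht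
  obtain ⟨k, hk⟩ := hroot.eigen (hα _ hst).2.1
  have hk0 : k ≠ 0 := by
    intro h0
    exact (hα _ hst).1 (by rw [hk, h0, zero_smul])
  have hchar : mP (t⁻¹ (α s)) * nab (t⁻¹ * s * t) ω
      = mE (t⁻¹ (α s)) * (ω - wAct (t⁻¹ * s * t) ω) := by
    have h1 := hnab _ hst ω
    rw [show ((1 : Ec r) ⊗ₜ[ℂ] linP (α (t⁻¹ * s * t))) = mP (α (t⁻¹ * s * t)) from rfl,
      show ((exti (α (t⁻¹ * s * t))) ⊗ₜ[ℂ] (1 : Pc r)) = mE (α (t⁻¹ * s * t)) from rfl,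
      hk, mP_smul, mE_smul, smul_mul_assoc, smul_mul_assoc] at h1
    exact smul_right_injective (Wc r) hk0 h1
  have h2 := congrArg (wAct t) hchar
  rw [map_mul, map_mul, wAct_mP, wAct_mE, map_sub, lequiv_apply_inv] at h2
  rw [wAct_wAct, show t * (t⁻¹ * s * t) = s * t by
    rw [← mul_assoc, ← mul_assoc, mul_inv_cancel, one_mul], ← wAct_wAct] at h2
  exact nab_char hα hnab hs _ _ h2

end Nab
end Aux4

/-- Proposition 2.6 of De Concini–Papi.
The operator `D_c` satisfies `D_c² = 0`, both as an operator on the Weil algebra `𝒲` and as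
an operator on `B`. -/
theorem statement8
    -- `W` is a finite irreducible reflection group on `V = ℂ^r` (complexified euclidean space),
    (W : Subgroup (Vc r ≃ₗ[ℂ] Vc r))
    (hWfin : Finite W)
    (hWorth : ∀ g ∈ W, ∀ x y, bil (g x) (g y) = bil x y)
    (hWirr : ∀ p : Submodule ℂ (Vc r), (∀ g ∈ W, ∀ v ∈ p, g v ∈ p) → p = ⊥ ∨ p = ⊤)
    -- `T` is the set of reflections of `W`, generating `W`, with roots `α s`,
    (T : Finset (Vc r ≃ₗ[ℂ] Vc r))
    (hT : ∀ g, g ∈ T ↔ g ∈ W ∧ ∃ a, IsReflRoot g a)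
    (hWgen : Subgroup.closure (T : Set _) = W)
    (α : (Vc r ≃ₗ[ℂ] Vc r) → Vc r)
    (hα : ∀ s ∈ T, IsReflRoot s (α s))
    -- `ψ₁, …, ψᵣ` are homogeneous generators of `A^W` of degrees `2 ≤ d₁ ≤ … ≤ d_r`,
    (ψ : Fin r → Pc r) (d : Fin r → ℕ)
    (hψhom : ∀ i, (ψ i).IsHomogeneous (d i))
    (hd2 : ∀ i, 2 ≤ d i) (hdmono : Monotone d)
    (hψinv : ∀ i, ∀ g ∈ W, pAct g (ψ i) = ψ i)
    (hψgen : ∀ q : Pc r, (∀ g ∈ W, pAct g q = q) ↔ q ∈ Algebra.adjoin ℂ (Set.range ψ))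
    (hψind : AlgebraicIndependent ℂ ψ)
    -- `nab s` is the operator `∇ₛ = (αₛ ⊗ 1)·(1−s)/αₛ` on the Weil algebra, characterized by
    -- `(1 ⊗ αₛ) · ∇ₛ(ω) = (αₛ ⊗ 1) · (ω − s·ω)` (multiplication by `1 ⊗ αₛ` is injective),
    (nab : (Vc r ≃ₗ[ℂ] Vc r) → Wc r →ₗ[ℂ] Wc r)
    (hnab : ∀ s ∈ T, ∀ ω, ((1 : Ec r) ⊗ₜ[ℂ] linP (α s)) * nab s ω
        = ((exti (α s)) ⊗ₜ[ℂ] (1 : Pc r)) * (ω - wAct s ω))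
    -- `Bact g` is the action of `g` on `B` induced by the action on the Weil algebra,
    (Bact : (Vc r ≃ₗ[ℂ] Vc r) → Bc ψ →ₐ[ℂ] Bc ψ)
    (hBact : ∀ g : Vc r ≃ₗ[ℂ] Vc r, ∀ ω : Wc r, Bact g (πB ψ ω) = πB ψ (wAct g ω))
    -- `c : T → ℂ` is a function constant on conjugacy classes,
    (c : (Vc r ≃ₗ[ℂ] Vc r) → ℂ)
    (hc : ∀ s ∈ T, ∀ w ∈ W, c (w * s * w⁻¹) = c s)
    -- `DcB` is the operator on `B` induced by the Dunkl differential `D_c = ∑_{s∈T} c(s)·∇ₛ`,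
    (DcB : Bc ψ →ₗ[ℂ] Bc ψ)
    (hDcB : ∀ ω : Wc r, DcB (πB ψ ω) = πB ψ (∑ s ∈ T, c s • nab s ω))
 :
    (∀ ω : Wc r, (∑ s ∈ T, c s • nab s (∑ s' ∈ T, c s' • nab s' ω)) = 0)
    ∧ (∀ x : Bc ψ, DcB (DcB x) = 0) := by
  classical
  -- basic facts about W and T
  have hmemW : ∀ s ∈ T, s ∈ W := fun s hs => ((hT s).mp hs).1
  have horth : ∀ t ∈ T, ∀ x y, bil (t x) (t y) = bil x y := fun t ht => hWorth t (hmemW t ht)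
  have hinv : ∀ t ∈ T, t⁻¹ = t := fun t ht => (hα t ht).inv_eq
  have htt : ∀ t ∈ T, t * t = 1 := fun t ht => (hα t ht).sq
  have hconj_mem : ∀ t ∈ T, ∀ s ∈ T, t * s * t ∈ T := by
    intro t ht s hs
    have h1 : IsReflRoot (t⁻¹ * s * t) (t⁻¹ (α s)) := (hα s hs).conj (horth t ht)
    rw [hinv t ht] at h1
    exact (hT _).mpr ⟨mul_mem (mul_mem (hmemW t ht) (hmemW s hs)) (hmemW t ht), ⟨_, h1⟩⟩
  have hc' : ∀ t ∈ T, ∀ s ∈ T, c (t * s * t) = c s := by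
    intro t ht s hs
    have := hc s hs t (hmemW t ht)
    rwa [hinv t ht] at this
  -- the Dunkl operator on the Weil algebra, and the auxiliary operator `Lv`
  set Dw : Wc r → Wc r := fun ω => ∑ s ∈ T, c s • nab s ω with hDwdef
  set Lv : Vc r → Wc r → Wc r := fun v ω =>
    ∑ t ∈ T, (c t * (2 * bil (α t) v / bil (α t) (α t))) • (mE (α t) * wAct t ω) with hLvdef
  have Dw_add : ∀ x y, Dw (x + y) = Dw x + Dw y := by
    intro x y
    simp only [hDwdef, map_add, smul_add, Finset.sum_add_distrib]
  have Dw_smul : ∀ (k : ℂ) (x : Wc r), Dw (k • x) = k • Dw x := by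
    intro k x
    simp only [hDwdef, map_smul, Finset.smul_sum]
    exact Finset.sum_congr rfl fun s _ => smul_comm _ _ _
  have Dw_zero : Dw 0 = 0 := by simp [hDwdef]
  have Dw_neg : ∀ x, Dw (-x) = -Dw x := by
    intro x
    simp only [hDwdef, map_neg, smul_neg, Finset.sum_neg_distrib]
  have Dw_one : Dw 1 = 0 := by
    simp only [hDwdef]
    exact Finset.sum_eq_zero fun s hs => by rw [nab_one hα hnab hs, smul_zero]
  -- commutation with multiplication by `1 ⊗ v`
  have hDwP : ∀ (v : Vc r) (ω : Wc r), Dw (mP v * ω) = mP v * Dw ω + Lv v ω := by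
    intro v ω
    simp only [hDwdef, hLvdef]
    rw [Finset.sum_congr rfl (fun s hs => by
      rw [nab_mulP hα hnab hs v ω, smul_add, smul_smul])]
    rw [Finset.sum_add_distrib, Finset.mul_sum]
    congr 1
    exact Finset.sum_congr rfl fun s _ => (mul_smul_comm _ _ _).symm
  -- anticommutation with multiplication by `u ⊗ 1`
  have hDwE : ∀ (u : Vc r) (ω : Wc r), Dw (mE u * ω) = -(mE u * Dw ω) := by
    intro u ω
    simp only [hDwdef]
    rw [Finset.sum_congr rfl (fun s hs => by rw [nab_mulE hα hnab hs u ω, smul_neg]),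
      Finset.sum_neg_distrib, Finset.mul_sum]
    congr 1
    exact Finset.sum_congr rfl fun s _ => (mul_smul_comm _ _ _).symm
  -- conjugation-invariance of the Dunkl operator
  have key_t : ∀ t ∈ T, ∀ ω : Wc r,
      (∑ s ∈ T, c s • nab (t * s * t) ω) = ∑ s ∈ T, c s • nab s ω := by
    intro t ht ω
    refine Finset.sum_nbij' (fun s => t * s * t) (fun s => t * s * t)
      (fun s hs => hconj_mem t ht s hs) (fun s hs => hconj_mem t ht s hs) ?_ ?_ ?_
    · intro s hs
      show t * (t * s * t) * t = s
      rw [show t * (t * s * t) * t = (t * t) * s * (t * t) by group, htt t ht, one_mul, mul_one]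
    · intro s hs
      show t * (t * s * t) * t = s
      rw [show t * (t * s * t) * t = (t * t) * s * (t * t) by group, htt t ht, one_mul, mul_one]
    · intro s hs
      show c s • nab (t * s * t) ω = c (t * s * t) • nab (t * s * t) ω
      rw [hc' t ht s hs]
  -- the key anticommutation `{Lv, Dw} = 0`
  have hDwL : ∀ (v : Vc r) (ω : Wc r), Dw (Lv v ω) = -(Lv v (Dw ω)) := by
    intro v ω
    have step1 : Dw (Lv v ω)
        = ∑ s ∈ T, ∑ t ∈ T, -((c t * (2 * bil (α t) v / bil (α t) (α t)) * c s) •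
            (mE (α t) * wAct t (nab (t * s * t) ω))) := by
      simp only [hDwdef, hLvdef, map_sum, map_smul, Finset.smul_sum]
      refine Finset.sum_congr rfl fun s hs => Finset.sum_congr rfl fun t htm => ?_
      rw [nab_mulE hα hnab hs (α t) (wAct t ω),
        nab_conj hα hnab hs (by rw [hinv t htm]; exact hconj_mem t htm s hs) (horth t htm) ω,
        hinv t htm]
      rw [smul_neg, smul_neg, smul_smul,
        show c s * (c t * (2 * bil (α t) v / bil (α t) (α t)))
          = c t * (2 * bil (α t) v / bil (α t) (α t)) * c s from by ring]
    have step2 : Lv v (Dw ω)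
        = ∑ t ∈ T, ∑ s ∈ T, (c t * (2 * bil (α t) v / bil (α t) (α t)) * c s) •
            (mE (α t) * wAct t (nab (t * s * t) ω)) := by
      simp only [hLvdef, hDwdef]
      refine Finset.sum_congr rfl fun t htm => ?_
      rw [← key_t t htm ω, map_sum, Finset.mul_sum, Finset.smul_sum]
      refine Finset.sum_congr rfl fun s hs => ?_
      rw [map_smul, mul_smul_comm, smul_smul]
    rw [step1, step2, Finset.sum_comm]
    simp only [← Finset.sum_neg_distrib]
  -- `Dw ∘ Dw` commutes with left multiplication by everything
  have hgen : ∀ x : Wc r, ∀ ω, Dw (Dw (x * ω)) = x * Dw (Dw ω) := by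
    have hP1 : ∀ ω, Dw (Dw ((1:Wc r) * ω)) = (1:Wc r) * Dw (Dw ω) := fun ω => by
      rw [one_mul, one_mul]
    have hPmul : ∀ x y : Wc r, (∀ ω, Dw (Dw (x * ω)) = x * Dw (Dw ω)) →
        (∀ ω, Dw (Dw (y * ω)) = y * Dw (Dw ω)) →
        ∀ ω, Dw (Dw ((x * y) * ω)) = (x * y) * Dw (Dw ω) := fun x y hx hy ω => by
      rw [mul_assoc, hx, hy, ← mul_assoc]
    have hPadd : ∀ x y : Wc r, (∀ ω, Dw (Dw (x * ω)) = x * Dw (Dw ω)) →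
        (∀ ω, Dw (Dw (y * ω)) = y * Dw (Dw ω)) →
        ∀ ω, Dw (Dw ((x + y) * ω)) = (x + y) * Dw (Dw ω) := fun x y hx hy ω => by
      rw [add_mul, Dw_add, Dw_add, hx, hy, add_mul]
    have hPsmul : ∀ (k : ℂ) (x : Wc r), (∀ ω, Dw (Dw (x * ω)) = x * Dw (Dw ω)) →
        ∀ ω, Dw (Dw ((k • x) * ω)) = (k • x) * Dw (Dw ω) := fun k x hx ω => by
      rw [smul_mul_assoc, Dw_smul, Dw_smul, hx, smul_mul_assoc]
    have hPP : ∀ v : Vc r, ∀ ω, Dw (Dw (mP v * ω)) = mP v * Dw (Dw ω) := fun v ω => by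
      rw [hDwP v ω, Dw_add, hDwP v (Dw ω), hDwL v ω, add_assoc, add_neg_cancel, add_zero]
    have hPE : ∀ u : Vc r, ∀ ω, Dw (Dw (mE u * ω)) = mE u * Dw (Dw ω) := fun u ω => by
      rw [hDwE u ω, Dw_neg, hDwE u (Dw ω), neg_neg]
    intro x
    induction x using TensorProduct.induction_on with
    | zero => intro ω; rw [zero_mul, zero_mul, Dw_zero, Dw_zero]
    | add x y hx hy => exact hPadd x y hx hy
    | tmul e q =>
      have he : ∀ e : Ec r, ∀ ω, Dw (Dw ((e ⊗ₜ[ℂ] (1:Pc r)) * ω))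
          = (e ⊗ₜ[ℂ] (1:Pc r)) * Dw (Dw ω) := by
        intro e
        induction e using ExteriorAlgebra.induction with
        | algebraMap k =>
          have h1 : (algebraMap ℂ (Ec r)) k ⊗ₜ[ℂ] (1:Pc r) = k • (1 : Wc r) := by
            rw [Algebra.algebraMap_eq_smul_one, ← TensorProduct.smul_tmul']
            rfl
          rw [h1]
          exact hPsmul k 1 hP1
        | ι v => exact hPE v
        | mul x y hx hy =>
          have h1 : (x * y) ⊗ₜ[ℂ] (1:Pc r) = (x ⊗ₜ[ℂ] (1:Pc r)) * (y ⊗ₜ[ℂ] (1:Pc r)) := by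
            rw [Algebra.TensorProduct.tmul_mul_tmul, mul_one]
          rw [h1]
          exact hPmul _ _ hx hy
        | add x y hx hy =>
          rw [TensorProduct.add_tmul]
          exact hPadd _ _ hx hy
      have hq : ∀ q : Pc r, ∀ ω, Dw (Dw (((1:Ec r) ⊗ₜ[ℂ] q) * ω))
          = ((1:Ec r) ⊗ₜ[ℂ] q) * Dw (Dw ω) := by
        intro q
        induction q using MvPolynomial.induction_on with
        | C k =>
          have h1 : (1:Ec r) ⊗ₜ[ℂ] (MvPolynomial.C k : Pc r) = k • (1 : Wc r) := by
            rw [Algebra.TensorProduct.one_def, ← TensorProduct.tmul_smul,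
              MvPolynomial.smul_eq_C_mul, mul_one]
          rw [h1]
          exact hPsmul k 1 hP1
        | add p q hp hq =>
          rw [TensorProduct.tmul_add]
          exact hPadd _ _ hp hq
        | mul_X p i hp =>
          have h1 : (1:Ec r) ⊗ₜ[ℂ] (p * MvPolynomial.X i) = ((1:Ec r) ⊗ₜ[ℂ] p) * mP (Pi.single i 1) := by
            rw [mP, linP_single, Algebra.TensorProduct.tmul_mul_tmul, mul_one]
          rw [h1]
          exact hPmul _ _ hp (hPP _)
      have h1 : e ⊗ₜ[ℂ] q = (e ⊗ₜ[ℂ] (1:Pc r)) * ((1:Ec r) ⊗ₜ[ℂ] q) := by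
        rw [Algebra.TensorProduct.tmul_mul_tmul, mul_one, one_mul]
      rw [h1]
      exact hPmul _ _ (he e) (hq q)
  -- conclusion on the Weil algebra
  have hmain : ∀ ω : Wc r, Dw (Dw ω) = 0 := by
    intro ω
    have h1 := hgen ω 1
    rw [mul_one, Dw_one, Dw_zero, mul_zero] at h1
    exact h1
  refine ⟨fun ω => hmain ω, ?_⟩
  -- conclusion on B
  intro x
  obtain ⟨ω, rfl⟩ := RingQuot.mkAlgHom_surjective ℂ (relJ ψ) x
  show DcB (DcB (πB ψ ω)) = 0
  rw [hDcB ω, hDcB]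
  have h0 : (∑ s ∈ T, c s • nab s (∑ s' ∈ T, c s' • nab s' ω)) = 0 := hmain ω
  rw [h0, map_zero]
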